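/- The composition of N convolutional maps α_1, ..., α_N (without padding), where α_i has filter width k_i and stride s_i, is itself a convolutional map with stride s_v = Π_{i=1}^N s_i and filter width k_v = k_1 + Σ_{i=2}^N (k_i - 1) Π_{m=1}^{i-1} s_m. -/

import Mathlib

/-- A convolution (no padding) with filter `w`, width `k` and stride `s`,
acting on signals indexed by `ℕ` (0-based): `(α x) j = ∑_{n<k} w n · x (j·s + n)`. -/
def convMap (k s : ℕ) (w : ℕ → ℝ) (x : ℕ → ℝ) : ℕ → ℝ :=
  fun j => ∑ n ∈ Finset.range k, w n * x (j * s + n)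

/-- The composition `α_{N-1} ∘ ⋯ ∘ α_0` of the first `N` convolutional layers. -/
def convComp (k s : ℕ → ℕ) (w : ℕ → ℕ → ℝ) : ℕ → (ℕ → ℝ) → (ℕ → ℝ)
  | 0 => id
  | N + 1 => fun x => convMap (k N) (s N) (w N) (convComp k s w N x)

/-- The composition of `N ≥ 1` convolutions with widths `k_i` and strides `s_i`
is itself a convolution, with stride `∏ s_i` and filter width
`k_1 + ∑_{i=2}^N (k_i - 1) ∏_{m<i} s_m` (0-indexed here). -/
theorem stmt_4 (N : ℕ) (hN : 1 ≤ N) (k s : ℕ → ℕ)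
    (hk : ∀ i, 1 ≤ k i) (hs : ∀ i, 1 ≤ s i) (w : ℕ → ℕ → ℝ) :
    ∃ v : ℕ → ℝ, ∀ x j,
      convComp k s w N x j =
        ∑ n ∈ Finset.range
            (k 0 + ∑ i ∈ Finset.Ico 1 N, (k i - 1) * ∏ m ∈ Finset.range i, s m),
          v n * x (j * (∏ i ∈ Finset.range N, s i) + n) := by
  induction N, hN using Nat.le_induction with
  | base =>
      refine ⟨w 0, fun x j => ?_⟩
      simp [convComp, convMap]
  | succ N hN ih =>
      obtain ⟨v, hv⟩ := ih
      set SN := ∏ m ∈ Finset.range N, s m with hSN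
      set KN := k 0 + ∑ i ∈ Finset.Ico 1 N, (k i - 1) * ∏ m ∈ Finset.range i, s m with hKN
      have hKsucc : k 0 + ∑ i ∈ Finset.Ico 1 (N + 1),
          (k i - 1) * ∏ m ∈ Finset.range i, s m = KN + (k N - 1) * SN := by
        rw [Finset.sum_Ico_succ_top hN, hKN, hSN, add_assoc]
      have hSsucc : ∏ i ∈ Finset.range (N + 1), s i = SN * s N := by
        rw [Finset.prod_range_succ]
      refine ⟨fun q => ∑ n ∈ Finset.range (k N), ∑ p ∈ Finset.range KN,
        if n * SN + p = q then w N n * v p else 0, fun x j => ?_⟩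
      rw [hKsucc, hSsucc]
      show convMap (k N) (s N) (w N) (convComp k s w N x) j = _
      simp only [convMap]
      have lhs_eq : ∑ n ∈ Finset.range (k N), w N n * convComp k s w N x (j * s N + n)
          = ∑ n ∈ Finset.range (k N), ∑ p ∈ Finset.range KN,
              w N n * v p * x (j * (SN * s N) + (n * SN + p)) := by
        refine Finset.sum_congr rfl fun n _ => ?_
        rw [hv, Finset.mul_sum]
        refine Finset.sum_congr rfl fun p _ => ?_
        have hidx : (j * s N + n) * SN + p = j * (SN * s N) + (n * SN + p) := by ring
        rw [hidx, mul_assoc]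
      rw [lhs_eq]
      have rhs_eq : ∑ q ∈ Finset.range (KN + (k N - 1) * SN),
          (∑ n ∈ Finset.range (k N), ∑ p ∈ Finset.range KN,
            if n * SN + p = q then w N n * v p else 0) * x (j * (SN * s N) + q)
          = ∑ n ∈ Finset.range (k N), ∑ p ∈ Finset.range KN,
              w N n * v p * x (j * (SN * s N) + (n * SN + p)) := by
        simp only [Finset.sum_mul, ite_mul, zero_mul]
        rw [Finset.sum_comm]
        refine Finset.sum_congr rfl fun n hn => ?_
        rw [Finset.sum_comm]
        refine Finset.sum_congr rfl fun p hp => ?_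
        rw [Finset.sum_ite_eq (Finset.range (KN + (k N - 1) * SN)) (n * SN + p)]
        have hn' : n * SN ≤ (k N - 1) * SN :=
          Nat.mul_le_mul_right _ (Nat.le_pred_of_lt (Finset.mem_range.mp hn))
        have hp' : p < KN := Finset.mem_range.mp hp
        rw [if_pos (Finset.mem_range.mpr (by omega))]
      rw [rhs_eq]
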